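/- Let c ∈ ℤ^k with S̃_c ≠ ∅, let p = π(c), and let F_S = { x ∈ [0,1)^k : x_j = 0 for all j ∈ J_c }. Then π(F_S) is the minimal face of Z containing p: π(F_S) is an extreme subset of Z containing p, and π(F_S) ⊆ F for every extreme subset F of Z with p ∈ F. -/

import Mathlib

/-- The linear map `φ : ℝⁿ → ℝᵏ` given by pairing with the integer vectors `v j`. -/
noncomputable def phiMap {n k : ℕ} (v : Fin k → Fin n → ℤ) :
    (Fin n → ℝ) →ₗ[ℝ] (Fin k → ℝ) where
  toFun u := fun j => ∑ i, u i * (v j i : ℝ)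
  map_add' u w := by
    funext j
    simp [add_mul, Finset.sum_add_distrib]
  map_smul' r u := by
    funext j
    simp [Finset.mul_sum, mul_assoc]

/-- The map `Φ : ℝⁿ → ℤᵏ`, `Φ(u)_j = ⌈⟨u, v_j⟩⌉`. -/
noncomputable def PhiMap {n k : ℕ} (v : Fin k → Fin n → ℤ) (u : Fin n → ℝ) : Fin k → ℤ :=
  fun j => ⌈∑ i, u i * (v j i : ℝ)⌉

set_option maxHeartbeats 2000000 in
/-- If `S̃_c ≠ ∅`, `p = π(c)` and `F_S = {x ∈ [0,1)ᵏ : x_j = 0 for j ∈ J_c}`, then `π(F_S)` is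
the minimal face of the half-open zonotope `Z` containing `p`: it is an extreme subset of `Z`
containing `p` and is contained in every extreme subset of `Z` containing `p`. -/
theorem stmt6 {n k : ℕ} (v : Fin k → Fin n → ℤ) (c : Fin k → ℤ)
    (hc : ({y : Fin n → ℝ | PhiMap v y = c}).Nonempty) :
    let π := (LinearMap.range (phiMap v)).mkQ
    let Z := π '' {x : Fin k → ℝ | ∀ j, x j ∈ Set.Ico (0 : ℝ) 1}
    let J : Set (Fin k) :=
      {j | ∀ y ∈ {y : Fin n → ℝ | PhiMap v y = c}, ∃ m : ℤ, phiMap v y j = (m : ℝ)}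
    let FS : Set (Fin k → ℝ) := {x | (∀ j, x j ∈ Set.Ico (0 : ℝ) 1) ∧ ∀ j ∈ J, x j = 0}
    let p := π (fun j => (c j : ℝ))
    IsExtreme ℝ Z (π '' FS) ∧ p ∈ π '' FS ∧
      ∀ F : Set ((Fin k → ℝ) ⧸ LinearMap.range (phiMap v)),
        IsExtreme ℝ Z F → p ∈ F → π '' FS ⊆ F := by
  classical
  intro π Z J FS p
  set cr : Fin k → ℝ := fun j => (c j : ℝ) with hcr
  obtain ⟨y₀, hy₀⟩ := hc
  -- quotient equality
  have hπeq : ∀ x y : Fin k → ℝ, π x = π y ↔ x - y ∈ LinearMap.range (phiMap v) :=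
    fun x y => Submodule.Quotient.eq _
  -- ceil characterization : points of the stratum give points of A
  have hceil : ∀ y : Fin n → ℝ, PhiMap v y = c → ∀ j,
      (0 : ℝ) ≤ cr j - phiMap v y j ∧ cr j - phiMap v y j < 1 := by
    intro y hy j
    have h1 : ⌈phiMap v y j⌉ = c j := congrFun hy j
    constructor
    · have := Int.le_ceil (phiMap v y j)
      rw [h1] at this
      simpa [hcr, sub_nonneg] using this
    · have := Int.ceil_lt_add_one (phiMap v y j)
      rw [h1] at this
      have : (c j : ℝ) < phiMap v y j + 1 := by exact_mod_cast this
      simp only [hcr]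
      linarith
  have hAV : ∀ y : Fin n → ℝ,
      ((fun i => cr i - phiMap v y i) - cr) ∈ LinearMap.range (phiMap v) := by
    intro y
    refine ⟨-y, ?_⟩
    funext i
    simp [map_neg]
  -- points of A come from the stratum
  have hrev : ∀ w : Fin k → ℝ, (∀ j, w j ∈ Set.Ico (0:ℝ) 1) →
      (w - cr) ∈ LinearMap.range (phiMap v) →
      ∃ y, PhiMap v y = c ∧ ∀ j, w j = cr j - phiMap v y j := by
    intro w hw hwV
    obtain ⟨u, hu⟩ := hwV
    refine ⟨-u, ?_, ?_⟩
    · funext j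
      have huj : phiMap v u j = w j - cr j := by rw [hu]; rfl
      have h1 : phiMap v (-u) j = cr j - w j := by
        rw [map_neg]
        simp [huj]
      show ⌈phiMap v (-u) j⌉ = c j
      rw [h1]
      rw [Int.ceil_eq_iff]
      constructor
      · have := (hw j).2
        simp only [hcr]
        linarith
      · have := (hw j).1
        simp only [hcr]
        linarith
    · intro j
      have h1 : phiMap v (-u) j = cr j - w j := by
        rw [map_neg]
        have huj : phiMap v u j = w j - cr j := by rw [hu]; rfl
        simp [huj]
      rw [h1]; ring
  -- points of A vanish on J
  have hAJ : ∀ w : Fin k → ℝ, (∀ j, w j ∈ Set.Ico (0:ℝ) 1) →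
      (w - cr) ∈ LinearMap.range (phiMap v) → ∀ j ∈ J, w j = 0 := by
    intro w hw hwV j hj
    obtain ⟨y, hy, hwy⟩ := hrev w hw hwV
    obtain ⟨m, hm⟩ := hj y hy
    have h1 : ⌈phiMap v y j⌉ = c j := congrFun hy j
    have h2 : m = c j := by
      rw [hm] at h1
      simpa using h1
    rw [hwy j, hm, h2]
    simp [hcr]
  -- the base point x₀
  set x₀ : Fin k → ℝ := fun i => cr i - phiMap v y₀ i with hx₀
  have hx₀box : ∀ i, x₀ i ∈ Set.Ico (0:ℝ) 1 := fun i => hceil y₀ hy₀ i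
  have hx₀V : (x₀ - cr) ∈ LinearMap.range (phiMap v) := hAV y₀
  -- for each j, a point of A positive at j when j ∉ J
  have hex : ∀ j : Fin k, ∃ w : Fin k → ℝ, (∀ i, w i ∈ Set.Ico (0:ℝ) 1) ∧
      (w - cr) ∈ LinearMap.range (phiMap v) ∧ (j ∉ J → 0 < w j) := by
    intro j
    by_cases hj : j ∈ J
    · exact ⟨x₀, hx₀box, hx₀V, fun h => absurd hj h⟩
    · have hj' : ¬ ∀ y ∈ {y : Fin n → ℝ | PhiMap v y = c}, ∃ m : ℤ, phiMap v y j = (m : ℝ) := hj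
      push_neg at hj'
      obtain ⟨y, hy, hym⟩ := hj'
      refine ⟨fun i => cr i - phiMap v y i, fun i => hceil y hy i, hAV y, fun _ => ?_⟩
      have h0 := (hceil y hy j).1
      rcases lt_or_eq_of_le h0 with h | h
      · exact h
      · exfalso
        apply hym (c j)
        simp only [hcr] at h
        linarith
  choose g hg1 hg2 hg3 using hex
  -- the relative interior point w*
  set N : ℝ := (k : ℝ) + 1 with hN
  have hN0 : (0:ℝ) < N := by positivity
  set ws : Fin k → ℝ := fun i => N⁻¹ * (x₀ i + ∑ j, g j i) with hws
  have hsum_nonneg : ∀ i, (0:ℝ) ≤ ∑ j, g j i := fun i =>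
    Finset.sum_nonneg fun j _ => (hg1 j i).1
  have hwsbox : ∀ i, ws i ∈ Set.Ico (0:ℝ) 1 := by
    intro i
    constructor
    · have := (hx₀box i).1
      have := hsum_nonneg i
      positivity
    · have h1 : x₀ i + ∑ j, g j i < N := by
        have hs : ∑ j, g j i ≤ (k : ℝ) := by
          calc ∑ j, g j i ≤ ∑ _j : Fin k, (1:ℝ) :=
                Finset.sum_le_sum fun j _ => (hg1 j i).2.le
            _ = (k : ℝ) := by simp
        have := (hx₀box i).2
        simp only [hN]
        linarith
      calc ws i = N⁻¹ * (x₀ i + ∑ j, g j i) := rfl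
        _ < N⁻¹ * N := by
            apply mul_lt_mul_of_pos_left h1
            positivity
        _ = 1 := inv_mul_cancel₀ hN0.ne'
  have hwsV : (ws - cr) ∈ LinearMap.range (phiMap v) := by
    have heq : ws - cr = N⁻¹ • ((x₀ - cr) + ∑ j, (g j - cr)) := by
      funext i
      simp only [Pi.sub_apply, Pi.smul_apply, Pi.add_apply, Finset.sum_apply, smul_eq_mul, hws]
      rw [Finset.sum_sub_distrib]
      simp only [Finset.sum_const, Finset.card_univ, Fintype.card_fin, nsmul_eq_mul]
      have hNne : N ≠ 0 := hN0.ne'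
      field_simp [hN]
      ring
    rw [heq]
    exact Submodule.smul_mem _ _
      (add_mem hx₀V (Submodule.sum_mem _ fun j _ => hg2 j))
  have hwsJ : ∀ j ∈ J, ws j = 0 := hAJ ws hwsbox hwsV
  have hwspos : ∀ j ∉ J, 0 < ws j := by
    intro j hj
    have h1 : 0 < ∑ i, g i j :=
      Finset.sum_pos' (fun i _ => (hg1 i j).1) ⟨j, Finset.mem_univ j, hg3 j hj⟩
    have h2 := (hx₀box j).1
    have : 0 < x₀ j + ∑ i, g i j := by linarith
    simp only [hws]
    positivity
  -- a uniform margin ε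
  obtain ⟨ε, hε0, hε1, hεb⟩ : ∃ ε : ℝ, 0 < ε ∧ ε ≤ 1 ∧
      ∀ j ∉ J, ε ≤ ws j ∧ ε ≤ 1 - ws j := by
    by_cases hne : (Finset.univ.filter (fun j : Fin k => j ∉ J)).Nonempty
    · set s := Finset.univ.filter (fun j : Fin k => j ∉ J) with hs
      refine ⟨min 1 (s.inf' hne (fun j => min (ws j) (1 - ws j))), ?_, min_le_left _ _, ?_⟩
      · apply lt_min one_pos
        rw [Finset.lt_inf'_iff]
        intro j hjs
        have hj : j ∉ J := by
          simp only [hs, Finset.mem_filter] at hjs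
          exact hjs.2
        exact lt_min (hwspos j hj) (by have := (hwsbox j).2; linarith)
      · intro j hj
        have hjs : j ∈ s := by
          simp only [hs, Finset.mem_filter]
          exact ⟨Finset.mem_univ j, hj⟩
        have h1 : s.inf' hne (fun j => min (ws j) (1 - ws j)) ≤ min (ws j) (1 - ws j) :=
          Finset.inf'_le _ hjs
        constructor
        · exact le_trans (min_le_right _ _) (le_trans h1 (min_le_left _ _))
        · exact le_trans (min_le_right _ _) (le_trans h1 (min_le_right _ _))
    · refine ⟨1, one_pos, le_refl _, fun j hj => absurd ?_ hne⟩
      exact ⟨j, Finset.mem_filter.mpr ⟨Finset.mem_univ j, hj⟩⟩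
  -- key lemma : any box point equivalent to a point of FS vanishes on J
  have hKey : ∀ (x f : Fin k → ℝ), (∀ i, x i ∈ Set.Ico (0:ℝ) 1) →
      (∀ i, f i ∈ Set.Ico (0:ℝ) 1) → (∀ j ∈ J, f j = 0) →
      (x - f) ∈ LinearMap.range (phiMap v) → ∀ j ∈ J, x j = 0 := by
    intro x f hx hf hfJ hxf
    set u : Fin k → ℝ := fun i => ws i + ε * (x i - f i) with hu
    have hubox : ∀ i, u i ∈ Set.Ico (0:ℝ) 1 := by
      intro i
      by_cases hi : i ∈ J
      · have : u i = ε * x i := by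
          simp only [hu, hwsJ i hi, hfJ i hi]
          ring
        rw [this]
        constructor
        · exact mul_nonneg hε0.le (hx i).1
        · calc ε * x i < ε * 1 := by
                exact mul_lt_mul_of_pos_left (hx i).2 hε0
            _ = ε := mul_one ε
            _ ≤ 1 := hε1
      · obtain ⟨h1, h2⟩ := hεb i hi
        have hd1 : (-1:ℝ) < x i - f i := by
          have := (hx i).1; have := (hf i).2; linarith
        have hd2 : x i - f i < 1 := by
          have := (hx i).2; have := (hf i).1; linarith
        have hl : ε * (-1) < ε * (x i - f i) := mul_lt_mul_of_pos_left hd1 hε0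
        have hr : ε * (x i - f i) < ε * 1 := mul_lt_mul_of_pos_left hd2 hε0
        constructor
        · simp only [hu]; nlinarith
        · simp only [hu]; nlinarith
    have huV : (u - cr) ∈ LinearMap.range (phiMap v) := by
      have heq : u - cr = (ws - cr) + ε • (x - f) := by
        funext i
        simp only [Pi.sub_apply, Pi.add_apply, Pi.smul_apply, smul_eq_mul, hu]
        ring
      rw [heq]
      exact add_mem hwsV (Submodule.smul_mem _ _ hxf)
    intro j hj
    have h0 := hAJ u hubox huV j hj
    have h1 : u j = ε * x j := by
      simp only [hu, hwsJ j hj, hfJ j hj]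
      ring
    rw [h1] at h0
    rcases mul_eq_zero.mp h0 with h | h
    · exact absurd h hε0.ne'
    · exact h
  -- part 2 witness
  have hx₀J : ∀ j ∈ J, x₀ j = 0 := hAJ x₀ hx₀box hx₀V
  have hpx₀ : π x₀ = p := (hπeq x₀ cr).mpr hx₀V
  refine ⟨⟨?_, ?_⟩, ⟨x₀, ⟨hx₀box, hx₀J⟩, hpx₀⟩, ?_⟩
  · -- π '' FS ⊆ Z
    rintro z ⟨f, hf, rfl⟩
    exact ⟨f, hf.1, rfl⟩
  · -- extremality
    rintro z₁ ⟨a₁, ha₁, rfl⟩ z₂ ⟨a₂, ha₂, rfl⟩ z ⟨f, hfFS, hfeq⟩ hseg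
    obtain ⟨a, b, ha, hb, hab, habz⟩ := hseg
    have hπw : π (a • a₁ + b • a₂) = π f := by
      rw [map_add, map_smul, map_smul, habz, ← hfeq]
    set w : Fin k → ℝ := a • a₁ + b • a₂ with hw
    have hwbox : ∀ i, w i ∈ Set.Ico (0:ℝ) 1 := by
      intro i
      have h1 := (ha₁ i).1; have h2 := (ha₁ i).2
      have h3 := (ha₂ i).1; have h4 := (ha₂ i).2
      constructor
      · simp only [hw, Pi.add_apply, Pi.smul_apply, smul_eq_mul]
        positivity
      · simp only [hw, Pi.add_apply, Pi.smul_apply, smul_eq_mul]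
        nlinarith
    have hwf : (w - f) ∈ LinearMap.range (phiMap v) := (hπeq w f).mp hπw
    have hwJ : ∀ j ∈ J, w j = 0 := hKey w f hwbox hfFS.1 hfFS.2 hwf
    have hzero : ∀ j ∈ J, a₁ j = 0 ∧ a₂ j = 0 := by
      intro j hj
      have h0 := hwJ j hj
      simp only [hw, Pi.add_apply, Pi.smul_apply, smul_eq_mul] at h0
      have h1 := (ha₁ j).1
      have h3 := (ha₂ j).1
      constructor <;> nlinarith
    exact ⟨a₁, ⟨ha₁, fun j hj => (hzero j hj).1⟩, rfl⟩
  · -- minimality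
    rintro F hF hpF z ⟨f, hfFS, rfl⟩
    set gp : Fin k → ℝ := fun i => (1 + ε) * ws i - ε * f i with hgp
    have hgpbox : ∀ i, gp i ∈ Set.Ico (0:ℝ) 1 := by
      intro i
      by_cases hi : i ∈ J
      · have : gp i = 0 := by
          simp only [hgp, hwsJ i hi, hfFS.2 i hi]
          ring
        rw [this]
        exact ⟨le_refl _, one_pos⟩
      · obtain ⟨h1, h2⟩ := hεb i hi
        have hd1 : (-1:ℝ) < ws i - f i := by
          have := (hwsbox i).1; have := (hfFS.1 i).2; linarith
        have hd2 : ws i - f i < 1 := by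
          have := (hwsbox i).2; have := (hfFS.1 i).1; linarith
        have hl : ε * (-1) < ε * (ws i - f i) := mul_lt_mul_of_pos_left hd1 hε0
        have hr : ε * (ws i - f i) < ε * 1 := mul_lt_mul_of_pos_left hd2 hε0
        constructor
        · simp only [hgp]; nlinarith
        · simp only [hgp]; nlinarith
    have hπws : π ws = p := (hπeq ws cr).mpr hwsV
    have hcomb : (1 + ε)⁻¹ • gp + (ε * (1 + ε)⁻¹) • f = ws := by
      funext i
      have hne : (1:ℝ) + ε ≠ 0 := by linarith
      simp only [Pi.add_apply, Pi.smul_apply, smul_eq_mul, hgp]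
      field_simp
      ring
    have hseg : p ∈ openSegment ℝ (π gp) (π f) := by
      refine ⟨(1 + ε)⁻¹, ε * (1 + ε)⁻¹, ?_, ?_, ?_, ?_⟩
      · positivity
      · positivity
      · have hne : (1:ℝ) + ε ≠ 0 := by linarith
        field_simp
      · rw [← map_smul, ← map_smul, ← map_add, hcomb, hπws]
    exact hF.2 ⟨f, hfFS.1, rfl⟩ ⟨gp, hgpbox, rfl⟩ hpF (by rw [openSegment_symm]; exact hseg)
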